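/- Let A and B be m×m complex idempotent matrices (A² = A, B² = B) and let k ≥ 1 be an integer. Then rank(rowBlock((A·B)^k·A, (B·A)^k·B)) = rank(rowBlock(A, B)) + rank((A·B)^k·A) + rank((B·A)^k·B) − rank(A) − rank(B). -/

import Mathlib

open Matrix

lemma range_fromColumns {m n₁ n₂ : ℕ} (A : Matrix (Fin m) (Fin n₁) ℂ)
    (B : Matrix (Fin m) (Fin n₂) ℂ) :
    LinearMap.range (fromCols A B).mulVecLin =
      LinearMap.range A.mulVecLin ⊔ LinearMap.range B.mulVecLin := by
  ext x
  rw [Submodule.mem_sup]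
  constructor
  · rintro ⟨v, rfl⟩
    refine ⟨A.mulVec (v ∘ Sum.inl), ⟨_, rfl⟩, B.mulVec (v ∘ Sum.inr), ⟨_, rfl⟩, ?_⟩
    rw [mulVecLin_apply, ← fromCols_mulVec_sumElim]
    exact congrArg _ (Sum.elim_comp_inl_inr v)
  · rintro ⟨y, ⟨u, rfl⟩, z, ⟨v, rfl⟩, rfl⟩
    exact ⟨Sum.elim u v, by simp⟩

lemma rank_fromColumns_eq {m n₁ n₂ : ℕ} (A : Matrix (Fin m) (Fin n₁) ℂ)
    (B : Matrix (Fin m) (Fin n₂) ℂ) :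
    ((fromCols A B).rank : ℤ) = (A.rank : ℤ) + (B.rank : ℤ) -
      (Module.finrank ℂ
        (LinearMap.range A.mulVecLin ⊓ LinearMap.range B.mulVecLin : Submodule ℂ (Fin m → ℂ)) : ℤ) := by
  have h := Submodule.finrank_sup_add_finrank_inf_eq
    (LinearMap.range A.mulVecLin) (LinearMap.range B.mulVecLin)
  rw [← range_fromColumns A B] at h
  simp only [Matrix.rank]
  omega

lemma comm_pow {m : ℕ} (X Y : Matrix (Fin m) (Fin m) ℂ) (n : ℕ) :
    (X * Y) ^ n * X = X * (Y * X) ^ n := by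
  induction n with
  | zero => simp
  | succ n ih =>
    rw [pow_succ' (X * Y), mul_assoc, ih, pow_succ' (Y * X)]
    noncomm_ring

theorem stmt_4 (m : ℕ) (A B : Matrix (Fin m) (Fin m) ℂ)
    (hA : A * A = A) (hB : B * B = B) (k : ℕ) (hk : 1 ≤ k) :
    ((Matrix.fromCols ((A * B) ^ k * A) ((B * A) ^ k * B)).rank : ℤ) =
      ((Matrix.fromCols A B).rank : ℤ) + (((A * B) ^ k * A).rank : ℤ)
        + (((B * A) ^ k * B).rank : ℤ) - (A.rank : ℤ) - (B.rank : ℤ) := by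
  have key : LinearMap.range ((A * B) ^ k * A).mulVecLin ⊓
        LinearMap.range ((B * A) ^ k * B).mulVecLin =
      LinearMap.range A.mulVecLin ⊓ LinearMap.range B.mulVecLin := by
    apply le_antisymm
    · refine inf_le_inf ?_ ?_
      · rw [comm_pow, Matrix.mulVecLin_mul]
        exact LinearMap.range_comp_le_range _ _
      · rw [comm_pow, Matrix.mulVecLin_mul]
        exact LinearMap.range_comp_le_range _ _
    · rintro x ⟨⟨u, hu⟩, ⟨v, hv⟩⟩
      simp only [mulVecLin_apply] at hu hv
      have hAx : A.mulVec x = x := by rw [← hu, mulVec_mulVec, hA]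
      have hBx : B.mulVec x = x := by rw [← hv, mulVec_mulVec, hB]
      have hABx : ∀ n, ((A * B) ^ n).mulVec x = x := by
        intro n
        induction n with
        | zero => simp
        | succ n ih => rw [pow_succ, ← mulVec_mulVec, ← mulVec_mulVec, hBx, hAx, ih]
      have hBAx : ∀ n, ((B * A) ^ n).mulVec x = x := by
        intro n
        induction n with
        | zero => simp
        | succ n ih => rw [pow_succ, ← mulVec_mulVec, ← mulVec_mulVec, hAx, hBx, ih]
      exact ⟨⟨x, by rw [mulVecLin_apply, ← mulVec_mulVec, hAx, hABx]⟩,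
             ⟨x, by rw [mulVecLin_apply, ← mulVec_mulVec, hBx, hBAx]⟩⟩
  rw [rank_fromColumns_eq, rank_fromColumns_eq, key]
  ring
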